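/- Let A be a local ring with maximal ideal m, let V be a finite free A-module, and let g : V → V be an A-linear endomorphism whose characteristic polynomial factors as χ_g = p₁⋯p_r with the pᵢ ∈ A[X] monic and pairwise coprime modulo m. Then V decomposes as the direct sum V = ⊕ᵢ ker(pᵢ(g)), each summand ker(pᵢ(g)) is a finite free A-module, and each summand is g-stable. -/

import Mathlib

open Polynomial IsLocalRing

/-- Over a local ring, a monic polynomial and any polynomial whose reductions mod the
maximal ideal are coprime are themselves coprime. -/
theorem isCoprime_of_isCoprime_map_residue {A : Type*} [CommRing A] [IsLocalRing A]
    {p q : Polynomial A} (hp : p.Monic)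
    (h : IsCoprime (p.map (IsLocalRing.residue A)) (q.map (IsLocalRing.residue A))) :
    IsCoprime p q := by
  obtain ⟨a', b', hab⟩ := h
  obtain ⟨a, rfl⟩ := Polynomial.map_surjective _ IsLocalRing.residue_surjective a'
  obtain ⟨b, rfl⟩ := Polynomial.map_surjective _ IsLocalRing.residue_surjective b'
  set c := a * p + b * q - 1 with hc_def
  have hmapc : c.map (IsLocalRing.residue A) = 0 := by
    simp only [hc_def, Polynomial.map_sub, Polynomial.map_add, Polynomial.map_mul,
      Polynomial.map_one]
    rw [hab, sub_self]
  have hc : ∀ i, c.coeff i ∈ maximalIdeal A := by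
    intro i
    have := congrArg (fun f => Polynomial.coeff f i) hmapc
    simp only [Polynomial.coeff_map, Polynomial.coeff_zero] at this
    exact Ideal.Quotient.eq_zero_iff_mem.mp this
  -- work in B = A[X]/(p)
  haveI : Module.Finite A (AdjoinRoot p) :=
    Module.Finite.of_basis (AdjoinRoot.powerBasis' hp).basis
  set B := AdjoinRoot p
  set N : Submodule A B := (Ideal.span {AdjoinRoot.mk p q}).restrictScalars A with hN
  have hmkc : AdjoinRoot.mk p c ∈ (maximalIdeal A) • (⊤ : Submodule A B) := by
    rw [← AdjoinRoot.aeval_eq, Polynomial.aeval_eq_sum_range]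
    exact Submodule.sum_mem _ fun i _ =>
      Submodule.smul_mem_smul (hc i) Submodule.mem_top
  have hle : (⊤ : Submodule A B) ≤ N ⊔ (maximalIdeal A) • (⊤ : Submodule A B) := by
    intro x _
    have h1 : (1 : B) = AdjoinRoot.mk p b * AdjoinRoot.mk p q - AdjoinRoot.mk p c := by
      have : AdjoinRoot.mk p c = AdjoinRoot.mk p b * AdjoinRoot.mk p q - 1 := by
        rw [hc_def]
        simp [AdjoinRoot.mk_self]
      rw [this]; ring
    have hx : x = x * (AdjoinRoot.mk p b * AdjoinRoot.mk p q) - x * AdjoinRoot.mk p c := by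
      rw [← mul_sub, ← h1, mul_one]
    rw [hx]
    refine Submodule.sub_mem _ (Submodule.mem_sup_left ?_) (Submodule.mem_sup_right ?_)
    · exact Ideal.mul_mem_left _ _ (Ideal.mul_mem_left _ _ (Ideal.subset_span rfl))
    · rw [Ideal.smul_top_eq_map] at hmkc ⊢
      exact Ideal.mul_mem_left _ _ hmkc
  have hNtop : N = ⊤ := by
    have hfg : (⊤ : Submodule A B).FG := Module.Finite.fg_top
    have hIJ : maximalIdeal A ≤ Ideal.jacobson ⊥ := by
      rw [IsLocalRing.jacobson_eq_maximalIdeal ⊥ bot_ne_top]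
    have key := Submodule.sup_smul_eq_sup_smul_of_le_smul_of_le_jacobson
      (N := N) (N' := (⊤ : Submodule A B)) hfg hIJ hle
    rw [Submodule.bot_smul, sup_bot_eq] at key
    exact top_le_iff.mp (hle.trans key.le)
  have h1N : (1 : B) ∈ Ideal.span {AdjoinRoot.mk p q} := by
    have : (1 : B) ∈ N := hNtop ▸ Submodule.mem_top
    exact this
  obtain ⟨u, hu⟩ := Ideal.mem_span_singleton.mp h1N
  obtain ⟨u', rfl⟩ := AdjoinRoot.mk_surjective u
  have : AdjoinRoot.mk p (q * u' - 1) = 0 := by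
    rw [map_sub, map_mul, map_one, ← hu, sub_self]
  obtain ⟨v, hv⟩ := AdjoinRoot.mk_eq_zero.mp this
  exact ⟨-v, u', by linear_combination hv⟩

theorem ker_aeval_finset_prod {A V : Type*} [CommRing A] [AddCommGroup V] [Module A V]
    (g : V →ₗ[A] V) {ι : Type*} [DecidableEq ι] (p : ι → Polynomial A) (S : Finset ι)
    (h : ∀ i ∈ S, ∀ j ∈ S, i ≠ j → IsCoprime (p i) (p j)) :
    ⨆ i ∈ S, LinearMap.ker (Polynomial.aeval g (p i)) =
      LinearMap.ker (Polynomial.aeval g (∏ i ∈ S, p i)) := by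
  induction S using Finset.induction_on with
  | empty => simp [Module.End.one_eq_id, LinearMap.ker_id]
  | @insert a S ha ih =>
    rw [Finset.prod_insert ha]
    rw [Finset.iSup_insert]
    rw [ih fun i hi j hj hij => h i (Finset.mem_insert_of_mem hi) j
      (Finset.mem_insert_of_mem hj) hij]
    exact Polynomial.sup_ker_aeval_eq_ker_aeval_mul_of_coprime g <|
      IsCoprime.prod_right fun j hj =>
        h a (Finset.mem_insert_self a S) j (Finset.mem_insert_of_mem hj)
          (by rintro rfl; exact ha hj)

/-- If the characteristic polynomial of an endomorphism `g` of a finite free module over a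
local ring factors as a product of monic polynomials pairwise coprime modulo the maximal
ideal, then the module is the direct sum of the kernels `ker (pᵢ(g))`, each of which is a
finite free `g`-stable submodule. -/
theorem stmt_4 {A V : Type*} [CommRing A] [IsLocalRing A] [AddCommGroup V] [Module A V]
    [Module.Free A V] [Module.Finite A V] (g : V →ₗ[A] V) {r : ℕ}
    (p : Fin r → Polynomial A) (hmonic : ∀ i, (p i).Monic)
    (hcop : ∀ i j, i ≠ j →
      IsCoprime ((p i).map (IsLocalRing.residue A)) ((p j).map (IsLocalRing.residue A)))
    (hchar : LinearMap.charpoly g = ∏ i, p i) :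
    DirectSum.IsInternal (fun i => LinearMap.ker (Polynomial.aeval g (p i))) ∧
    (∀ i, Module.Free A (LinearMap.ker (Polynomial.aeval g (p i))) ∧
      Module.Finite A (LinearMap.ker (Polynomial.aeval g (p i)))) ∧
    (∀ i, ∀ x ∈ LinearMap.ker (Polynomial.aeval g (p i)),
      g x ∈ LinearMap.ker (Polynomial.aeval g (p i))) := by
  classical
  have hcop' : ∀ i j, i ≠ j → IsCoprime (p i) (p j) := fun i j hij =>
    isCoprime_of_isCoprime_map_residue (hmonic i) (hcop i j hij)
  set K : Fin r → Submodule A V := fun i => LinearMap.ker (Polynomial.aeval g (p i)) with hK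
  -- sup over all is ⊤
  have hsup : ⨆ i, K i = ⊤ := by
    have h1 := ker_aeval_finset_prod g p Finset.univ
      (fun i _ j _ hij => hcop' i j hij)
    simp only [Finset.mem_univ, iSup_true] at h1
    simp only [hK]
    rw [h1, ← hchar, LinearMap.aeval_self_charpoly, LinearMap.ker_zero]
  -- disjointness of each K i from the sup of the others
  have hdisj : ∀ i : Fin r, Disjoint (K i) (⨆ j ∈ Finset.univ.erase i, K j) := by
    intro i
    rw [ker_aeval_finset_prod g p (Finset.univ.erase i)
      (fun a _ b _ hab => hcop' a b hab)]
    exact Polynomial.disjoint_ker_aeval_of_isCoprime g <|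
      IsCoprime.prod_right fun j hj =>
        hcop' i j (fun h => (Finset.mem_erase.mp hj).1 h.symm)
  have hindep : iSupIndep K := by
    intro i
    have heq : (⨆ j ∈ Finset.univ.erase i, K j) = ⨆ j, ⨆ (_ : j ≠ i), K j := by
      apply le_antisymm
      · exact iSup₂_le fun j hj => le_iSup₂ (f := fun j (_ : j ≠ i) => K j) j
          (Finset.mem_erase.mp hj).1
      · exact iSup₂_le fun j hj => le_iSup₂ (f := fun j (_ : j ∈ Finset.univ.erase i) => K j) j
          (Finset.mem_erase.mpr ⟨hj, Finset.mem_univ j⟩)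
    rw [← heq]
    exact hdisj i
  have hinternal : DirectSum.IsInternal K :=
    DirectSum.isInternal_submodule_of_iSupIndep_of_iSup_eq_top hindep hsup
  refine ⟨hinternal, ?_, ?_⟩
  · intro i
    -- K i is a direct summand of V
    have hcompl : IsCompl (K i) (⨆ j ∈ Finset.univ.erase i, K j) := by
      refine ⟨hdisj i, codisjoint_iff.mpr ?_⟩
      rw [← top_le_iff, ← hsup]
      refine iSup_le fun j => ?_
      by_cases hji : j = i
      · subst hji; exact le_sup_left
      · exact le_trans (le_iSup₂ (f := fun j (_ : j ∈ Finset.univ.erase i) => K j) j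
          (Finset.mem_erase.mpr ⟨hji, Finset.mem_univ j⟩)) le_sup_right
    set e := Submodule.prodEquivOfIsCompl _ _ hcompl with he
    set π : V →ₗ[A] K i := LinearMap.fst A (K i) _ ∘ₗ e.symm.toLinearMap with hπ
    have hsplit : π ∘ₗ (K i).subtype = LinearMap.id := by
      ext x
      simp only [hπ, he, LinearMap.comp_apply, Submodule.coe_subtype, LinearMap.id_apply,
        LinearEquiv.coe_coe, Submodule.prodEquivOfIsCompl_symm_apply_left,
        LinearMap.fst_apply]
    have hsurj : Function.Surjective π := fun x =>
      ⟨(K i).subtype x, congrArg (fun f => f x) hsplit⟩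
    haveI : Module.Finite A (K i) := Module.Finite.of_surjective π hsurj
    haveI : Module.Projective A (K i) := Module.Projective.of_split (K i).subtype π hsplit
    haveI : Module.FinitePresentation A (K i) := Module.finitePresentation_of_projective A _
    exact ⟨Module.free_of_flat_of_isLocalRing, inferInstance⟩
  · intro i x hx
    rw [LinearMap.mem_ker] at hx ⊢
    have hcomm : Polynomial.aeval g (p i) ∘ₗ g = g ∘ₗ Polynomial.aeval g (p i) := by
      have h1 : Polynomial.aeval g (p i * X) = Polynomial.aeval g (X * p i) := by
        rw [mul_comm]
      simpa [Polynomial.aeval_mul, Module.End.mul_eq_comp] using h1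
    calc Polynomial.aeval g (p i) (g x) = (Polynomial.aeval g (p i) ∘ₗ g) x := rfl
      _ = (g ∘ₗ Polynomial.aeval g (p i)) x := by rw [hcomm]
      _ = g (Polynomial.aeval g (p i) x) := rfl
      _ = 0 := by rw [hx, map_zero]
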